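/- Let K ⊆ ℝ^n be a centrally symmetric convex body of volume 1 and 0 < δ < 1/e. Then M_δ(K) ⊆ e · Z_{log(1/δ)}(K), where Z_p(K) is the L_p centroid body of K. -/

import Mathlib

open MeasureTheory Metric Set
open scoped RealInnerProductSpace ENNReal Topology Pointwise

noncomputable def metronoid {n : ℕ} (μ : Measure (EuclideanSpace ℝ (Fin n))) :
    Set (EuclideanSpace ℝ (Fin n)) :=
  {z | ∃ f : EuclideanSpace ℝ (Fin n) → ℝ,
    (∀ y, 0 ≤ f y ∧ f y ≤ 1) ∧ Integrable f μ ∧ (∫ y, f y ∂μ) = 1 ∧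
    Integrable (fun y => f y • y) μ ∧ z = ∫ y, f y • y ∂μ}

/-- The Ulam floating body `M_δ(K)`. -/
noncomputable def ulam {n : ℕ} (K : Set (EuclideanSpace ℝ (Fin n))) (δ : ℝ) :
    Set (EuclideanSpace ℝ (Fin n)) :=
  metronoid ((volume.restrict K).withDensity fun _ => ENNReal.ofReal (1 / δ))

/-- The `L_p` centroid body `Z_p(K)` of a body of volume `1`: the convex body with
support function `h(θ) = (∫_K |⟨x,θ⟩|^p dx)^{1/p}`. -/
noncomputable def centroidBody {n : ℕ} (p : ℝ) (K : Set (EuclideanSpace ℝ (Fin n))) :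
    Set (EuclideanSpace ℝ (Fin n)) :=
  {x | ∀ θ : EuclideanSpace ℝ (Fin n), ⟪x, θ⟫ ≤ (∫ y in K, |⟪y, θ⟫| ^ p) ^ (1 / p)}

/-- For a symmetric convex body of volume `1` and `0 < δ < 1/e`:
`M_δ(K) ⊆ e · Z_{log(1/δ)}(K)`. -/
theorem stmt8 (n : ℕ) (K : Set (EuclideanSpace ℝ (Fin n)))
    (hK : IsCompact K) (hKc : Convex ℝ K) (hKi : (interior K).Nonempty)
    (hsymm : K = -K) (hvol : volume K = 1)
    (δ : ℝ) (hδ0 : 0 < δ) (hδ1 : δ < 1 / Real.exp 1) :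
    ulam K δ ⊆ Real.exp 1 • centroidBody (Real.log (1 / δ)) K := by
  intro z hz
  obtain ⟨f, hf01, hfint, hfone, hfvint, hzeq⟩ := hz
  have hδ0' : (0:ℝ) < 1 / δ := by positivity
  set p : ℝ := Real.log (1 / δ) with hp
  have he : Real.exp 1 < 1 / δ := by
    rw [lt_div_iff₀ hδ0]
    rw [lt_div_iff₀ (Real.exp_pos 1)] at hδ1
    nlinarith [Real.exp_pos 1]
  have hp1 : 1 < p := (Real.lt_log_iff_exp_lt hδ0').2 he
  set q : ℝ := Real.conjExponent p with hqdef
  have hpq : p.HolderConjugate q := Real.HolderConjugate.conjExponent hp1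
  set μK := volume.restrict K with hμK
  haveI : IsFiniteMeasure μK := ⟨by
    rw [hμK, Measure.restrict_apply_univ, hvol]; exact ENNReal.one_lt_top⟩
  have hKm : MeasurableSet K := hK.isClosed.measurableSet
  have hc0 : (ENNReal.ofReal (1 / δ)) ≠ 0 := (ENNReal.ofReal_pos.2 hδ0').ne'
  have hctop : (ENNReal.ofReal (1 / δ)) ≠ ⊤ := ENNReal.ofReal_ne_top
  have hμeq : (volume.restrict K).withDensity (fun _ => ENNReal.ofReal (1 / δ))
      = (ENNReal.ofReal (1 / δ)) • μK := withDensity_const _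
  rw [hμeq] at hfint hfone hfvint hzeq
  have hfintK : Integrable f μK := (integrable_smul_measure hc0 hctop).1 hfint
  have hfvintK : Integrable (fun y => f y • y) μK :=
    (integrable_smul_measure hc0 hctop).1 hfvint
  have htoReal : (ENNReal.ofReal (1 / δ)).toReal = 1 / δ :=
    ENNReal.toReal_ofReal hδ0'.le
  rw [integral_smul_measure, htoReal] at hfone hzeq
  have hintf : ∫ y, f y ∂μK = δ := by
    rw [smul_eq_mul] at hfone
    field_simp at hfone
    linarith
  -- membership via inverse scaling
  rw [Set.mem_smul_set_iff_inv_smul_mem₀ (Real.exp_pos 1).ne']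
  simp only [centroidBody, Set.mem_setOf_eq]
  intro θ
  -- notation: g y = ⟪y, θ⟫
  set g : EuclideanSpace ℝ (Fin n) → ℝ := fun y => ⟪y, θ⟫ with hg
  have hgcont : Continuous g := continuous_id.inner continuous_const
  obtain ⟨C, hC⟩ := hK.exists_bound_of_continuousOn hgcont.continuousOn
  -- integrability facts
  have hgint : Integrable (fun y => |g y|) μK :=
    (hgcont.abs.continuousOn.integrableOn_compact hK)
  have hfgint : Integrable (fun y => f y * g y) μK := by
    refine (hfvintK.const_inner θ).congr (ae_of_all _ fun y => ?_)
    show ⟪θ, f y • y⟫ = f y * g y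
    rw [real_inner_smul_right, real_inner_comm]
  have hfagint : Integrable (fun y => f y * |g y|) μK := by
    refine hgint.bdd_mul hfintK.aestronglyMeasurable (c := 1) (ae_of_all _ fun y => ?_)
    rw [Real.norm_eq_abs, abs_of_nonneg (hf01 y).1]; exact (hf01 y).2
  -- Memℒp facts for Hölder
  have hfq : MemLp f (ENNReal.ofReal q) μK := by
    refine MemLp.of_bound hfintK.aestronglyMeasurable 1 (ae_of_all _ fun y => ?_)
    rw [Real.norm_eq_abs, abs_of_nonneg (hf01 y).1]; exact (hf01 y).2
  have hgp : MemLp (fun y => |g y|) (ENNReal.ofReal p) μK := by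
    refine MemLp.of_bound hgcont.abs.aestronglyMeasurable C ?_
    rw [hμK]
    refine ae_restrict_of_forall_mem hKm fun y hy => ?_
    rw [Real.norm_eq_abs, abs_abs, ← Real.norm_eq_abs]
    exact hC y hy
  -- Hölder
  have hHolder : ∫ y, f y * |g y| ∂μK ≤
      (∫ y, f y ^ q ∂μK) ^ (1 / q) * (∫ y, |g y| ^ p ∂μK) ^ (1 / p) :=
    integral_mul_le_Lp_mul_Lq_of_nonneg hpq.symm
      (ae_of_all _ fun y => (hf01 y).1) (ae_of_all _ fun y => abs_nonneg _) hfq hgp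
  -- ∫ f^q ≤ δ
  have hfq_le : ∀ y, f y ^ q ≤ f y := by
    intro y
    rcases eq_or_lt_of_le (hf01 y).1 with h0 | h0
    · rw [← h0, Real.zero_rpow hpq.symm.ne_zero]
    · calc f y ^ q ≤ f y ^ (1:ℝ) :=
            Real.rpow_le_rpow_of_exponent_ge h0 (hf01 y).2 hpq.symm.lt.le
        _ = f y := Real.rpow_one _
  have hfq_int : Integrable (fun y => f y ^ q) μK := by
    have h := hfq.integrable_norm_rpow (ENNReal.ofReal_pos.2 hpq.symm.pos).ne'
      ENNReal.ofReal_ne_top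
    rw [ENNReal.toReal_ofReal hpq.symm.nonneg] at h
    refine h.congr (ae_of_all _ fun y => ?_)
    show ‖f y‖ ^ q = f y ^ q
    rw [Real.norm_eq_abs, abs_of_nonneg (hf01 y).1]
  have hintfq : ∫ y, f y ^ q ∂μK ≤ δ := by
    rw [← hintf]; exact integral_mono hfq_int hfintK hfq_le
  have hintfq_pow : (∫ y, f y ^ q ∂μK) ^ (1 / q) ≤ δ ^ (1 / q) :=
    Real.rpow_le_rpow (integral_nonneg fun y => Real.rpow_nonneg (hf01 y).1 q)
      hintfq hpq.symm.one_div_nonneg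
  set A : ℝ := (∫ y, |g y| ^ p ∂μK) ^ (1 / p) with hA
  have hA0 : 0 ≤ A :=
    Real.rpow_nonneg (integral_nonneg fun y => Real.rpow_nonneg (abs_nonneg _) p) _
  have hfg_le : ∫ y, f y * g y ∂μK ≤ δ ^ (1 / q) * A := by
    calc ∫ y, f y * g y ∂μK ≤ ∫ y, f y * |g y| ∂μK :=
          integral_mono hfgint hfagint fun y =>
            mul_le_mul_of_nonneg_left (le_abs_self _) (hf01 y).1
      _ ≤ (∫ y, f y ^ q ∂μK) ^ (1 / q) * A := hHolder
      _ ≤ δ ^ (1 / q) * A := mul_le_mul_of_nonneg_right hintfq_pow hA0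
  -- inner product of z with θ
  have hzθ : ⟪z, θ⟫ = (1 / δ) * ∫ y, f y * g y ∂μK := by
    rw [hzeq, real_inner_smul_left]
    congr 1
    rw [real_inner_comm, ← integral_inner hfvintK θ]
    refine integral_congr_ae (ae_of_all _ fun y => ?_)
    show ⟪θ, f y • y⟫ = f y * g y
    rw [real_inner_smul_right, real_inner_comm]
  -- the scalar identity: e⁻¹ * (1/δ) * δ^(1/q) = 1
  have hlogδ : Real.log δ = -p := by
    rw [hp, one_div, Real.log_inv, neg_neg]
  have hscal : δ ^ (1 / q) * (1 / δ) = Real.exp 1 := by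
    rw [one_div δ, ← Real.rpow_neg_one δ, ← Real.rpow_add hδ0]
    have h1q : 1 / q = 1 - 1 / p := by
      have := hpq.inv_add_inv_eq_one
      rw [one_div, one_div]; linarith
    have hexp : (1 / q + (-1 : ℝ)) = -(1 / p) := by rw [h1q]; ring
    rw [hexp, Real.rpow_def_of_pos hδ0, hlogδ]
    congr 1
    have hpne : p ≠ 0 := by positivity
    field_simp
  -- finish
  show ⟪(Real.exp 1)⁻¹ • z, θ⟫ ≤ A
  rw [real_inner_smul_left, hzθ]
  calc (Real.exp 1)⁻¹ * ((1 / δ) * ∫ y, f y * g y ∂μK)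
      ≤ (Real.exp 1)⁻¹ * ((1 / δ) * (δ ^ (1 / q) * A)) := by
        refine mul_le_mul_of_nonneg_left
          (mul_le_mul_of_nonneg_left hfg_le (by positivity)) (by positivity)
    _ = (δ ^ (1 / q) * (1 / δ)) * A * (Real.exp 1)⁻¹ := by ring
    _ = A := by rw [hscal]; field_simp
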